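/- Let λ ∈ ℂ, ρ > 1, M ≥ 0, and let f : ℂ → ℂ be analytic on the closed disk {z ∈ ℂ : |z − λ| ≤ ρ} with |f(z)| ≤ M for all z in that disk. Let R ≥ 1 and let ζ = exp(2πi/R). Then | (1/R)·Σ_{j=0}^{R−1} f(λ + ζʲ) − f(λ) | ≤ M/(ρᴿ − 1). In particular, the average of f over the R-th roots of unity shifted by λ converges to f(λ) exponentially fast as R → ∞. -/

import Mathlib

open Complex

lemma rootsum_aux (R : ℕ) (hR : 1 ≤ R) (n : ℕ) :
    (∑ j ∈ Finset.range R, ((Complex.exp (2 * Real.pi * Complex.I / R)) ^ n) ^ j)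
      = if R ∣ n then (R : ℂ) else 0 := by
  have pr : IsPrimitiveRoot (Complex.exp (2 * Real.pi * Complex.I / R)) R :=
    Complex.isPrimitiveRoot_exp R (by omega)
  by_cases h : R ∣ n
  · have h1 : (Complex.exp (2 * Real.pi * Complex.I / R)) ^ n = 1 :=
      (pr.pow_eq_one_iff_dvd n).2 h
    simp [h1, h]
  · have hne : (Complex.exp (2 * Real.pi * Complex.I / R)) ^ n ≠ 1 := by
      intro hc
      exact h ((pr.pow_eq_one_iff_dvd n).1 hc)
    rw [geom_sum_eq hne]
    have : ((Complex.exp (2 * Real.pi * Complex.I / R)) ^ n) ^ R = 1 := by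
      rw [← pow_mul, mul_comm n R, pow_mul, pr.pow_eq_one, one_pow]
    simp [this, h]

/-- Exponential accuracy of the shifted roots-of-unity average: if `f` is
analytic on the closed disk of radius `ρ > 1` around `z₀` and bounded by `M`
there, then the average of `f` over the `R`-th roots of unity shifted by `z₀`
approximates `f z₀` with error at most `M/(ρᴿ − 1)`. -/
theorem stmt_13 (z₀ : ℂ) (ρ : ℝ) (hρ : 1 < ρ) (M : ℝ) (hM : 0 ≤ M)
    (f : ℂ → ℂ)
    (hf : ∀ z ∈ Metric.closedBall z₀ ρ, AnalyticAt ℂ f z)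
    (hbound : ∀ z ∈ Metric.closedBall z₀ ρ, ‖f z‖ ≤ M)
    (R : ℕ) (hR : 1 ≤ R) :
    let ζ : ℂ := Complex.exp (2 * Real.pi * Complex.I / R)
    ‖(1 / (R : ℂ)) * (∑ j ∈ Finset.range R, f (z₀ + ζ ^ j)) - f z₀‖ ≤ M / (ρ ^ R - 1) := by
  intro ζ
  have hρ0 : (0 : ℝ) < ρ := lt_trans one_pos hρ
  set ρ' : NNReal := ⟨ρ, hρ0.le⟩ with hρ'
  have hρ'ρ : (ρ' : ℝ) = ρ := rfl
  -- power series
  have hdiff : DifferentiableOn ℂ f (Metric.closedBall z₀ (ρ' : ℝ)) := fun z hz =>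
    ((hf z hz).differentiableAt).differentiableWithinAt
  have hball : HasFPowerSeriesOnBall f (cauchyPowerSeries f z₀ ρ') z₀ ρ' :=
    hdiff.hasFPowerSeriesOnBall (by exact_mod_cast hρ0)
  set p := cauchyPowerSeries f z₀ (ρ' : ℝ) with hp
  set a : ℕ → ℂ := fun n => p.coeff n with ha
  -- coefficient bounds
  have hcont : Continuous fun θ : ℝ => ‖f (circleMap z₀ ρ θ)‖ := by
    refine Continuous.norm ?_
    refine continuous_iff_continuousAt.2 fun θ => ?_
    have hmem : circleMap z₀ ρ θ ∈ Metric.closedBall z₀ ρ := by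
      exact circleMap_mem_closedBall z₀ hρ0.le θ
    exact ((hf _ hmem).continuousAt).comp (continuous_circleMap z₀ ρ).continuousAt
  have hint : (∫ θ : ℝ in (0:ℝ)..2 * Real.pi, ‖f (circleMap z₀ ρ θ)‖) ≤ 2 * Real.pi * M := by
    have : (∫ θ : ℝ in (0:ℝ)..2 * Real.pi, ‖f (circleMap z₀ ρ θ)‖)
        ≤ ∫ _ : ℝ in (0:ℝ)..2 * Real.pi, M := by
      refine intervalIntegral.integral_mono_on Real.two_pi_pos.le
        (hcont.intervalIntegrable _ _) (intervalIntegrable_const) fun θ _ => ?_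
      refine hbound _ ?_
      exact circleMap_mem_closedBall z₀ hρ0.le θ
    rw [intervalIntegral.integral_const] at this
    simpa [smul_eq_mul] using this
  have hcoeff : ∀ n : ℕ, ‖a n‖ ≤ M / ρ ^ n := by
    intro n
    have h1 : ‖a n‖ ≤ ‖p n‖ := by
      have h := (p n).le_opNorm (1 : Fin n → ℂ)
      have hprod : (∏ i : Fin n, ‖(1 : Fin n → ℂ) i‖) = 1 := by simp
      calc ‖a n‖ = ‖p n 1‖ := rfl
        _ ≤ ‖p n‖ * ∏ i : Fin n, ‖(1 : Fin n → ℂ) i‖ := h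
        _ = ‖p n‖ := by rw [hprod, mul_one]
    have h2 := norm_cauchyPowerSeries_le f z₀ (ρ' : ℝ) n
    have h3 : ((2 * Real.pi)⁻¹ * ∫ θ : ℝ in (0:ℝ)..2 * Real.pi,
        ‖f (circleMap z₀ (ρ' : ℝ) θ)‖) * |(ρ' : ℝ)|⁻¹ ^ n ≤ M * (ρ⁻¹) ^ n := by
      rw [hρ'ρ, abs_of_pos hρ0]
      refine mul_le_mul_of_nonneg_right ?_ (by positivity)
      rw [inv_mul_le_iff₀ Real.two_pi_pos]
      simpa [mul_comm] using hint
    have := le_trans h1 (le_trans h2 h3)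
    simpa [div_eq_mul_inv, inv_pow] using this
  -- HasSum representations
  have hsum : ∀ j : ℕ, HasSum (fun n => (ζ ^ j) ^ n * a n) (f (z₀ + ζ ^ j)) := by
    intro j
    have hζ : ‖ζ‖ = 1 := by
      have h1 : (2 * Real.pi * Complex.I / R) = ((2 * Real.pi / R : ℝ) : ℂ) * Complex.I := by
        push_cast; ring
      rw [show ζ = Complex.exp (2 * Real.pi * Complex.I / R) from rfl, h1]
      exact Complex.norm_exp_ofReal_mul_I _
    have hmem : ζ ^ j ∈ EMetric.ball (0 : ℂ) ρ' := by
      have hlt : ‖ζ ^ j‖₊ < ρ' := by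
        rw [← NNReal.coe_lt_coe, coe_nnnorm, hρ'ρ, norm_pow, hζ, one_pow]
        exact hρ
      exact mem_emetric_ball_zero_iff.2 (ENNReal.coe_lt_coe.2 hlt)
    have := hball.hasSum hmem
    simpa [FormalMultilinearSeries.apply_eq_pow_smul_coeff, smul_eq_mul] using this
  have hS : HasSum (fun n => (1 / (R : ℂ)) * ∑ j ∈ Finset.range R, (ζ ^ j) ^ n * a n)
      ((1 / (R : ℂ)) * ∑ j ∈ Finset.range R, f (z₀ + ζ ^ j)) :=
    (hasSum_sum fun j _ => hsum j).mul_left _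
  have hRne : (R : ℂ) ≠ 0 := Nat.cast_ne_zero.2 (by omega)
  have hterm : ∀ n : ℕ, (1 / (R : ℂ)) * ∑ j ∈ Finset.range R, (ζ ^ j) ^ n * a n
      = if R ∣ n then a n else 0 := by
    intro n
    have h1 : ∀ j : ℕ, (ζ ^ j) ^ n = (ζ ^ n) ^ j := fun j => by
      rw [← pow_mul, ← pow_mul, mul_comm]
    simp only [h1]; rw [← Finset.sum_mul, rootsum_aux R hR n]
    split_ifs with h
    · field_simp
    · simp
  rw [funext hterm] at hS
  have hfz₀ : f z₀ = a 0 := (hball.coeff_zero (1 : Fin 0 → ℂ)).symm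
  have h0 : HasSum (fun n : ℕ => if n = 0 then a 0 else 0) (f z₀) := by
    rw [hfz₀]; exact hasSum_ite_eq 0 (a 0)
  have hdiffsum : HasSum (fun n : ℕ => (if R ∣ n then a n else 0) - (if n = 0 then a 0 else 0))
      ((1 / (R : ℂ)) * (∑ j ∈ Finset.range R, f (z₀ + ζ ^ j)) - f z₀) := hS.sub h0
  -- reindex along multiples of R
  set e : ℕ → ℕ := fun k => (k + 1) * R with he
  have hinj : Function.Injective e := by
    intro x y hxy
    have h' : (x + 1) * R = (y + 1) * R := hxy
    have := Nat.eq_of_mul_eq_mul_right (show 0 < R by omega) h'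
    omega
  have hvanish : ∀ n ∉ Set.range e,
      ((if R ∣ n then a n else 0) - (if n = 0 then a 0 else 0)) = 0 := by
    intro n hn
    by_cases h0' : n = 0
    · subst h0'; simp
    · by_cases hdvd : R ∣ n
      · exfalso
        obtain ⟨m, hm⟩ := hdvd
        apply hn
        refine ⟨m - 1, ?_⟩
        have hm1 : m ≠ 0 := by
          rintro rfl
          simp at hm
          exact h0' hm
        simp only [he]
        rw [hm]
        have hmm : m - 1 + 1 = m := by omega
        rw [hmm, mul_comm]
      · simp [hdvd, h0']
  have hre : HasSum (fun k : ℕ => a ((k + 1) * R))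
      ((1 / (R : ℂ)) * (∑ j ∈ Finset.range R, f (z₀ + ζ ^ j)) - f z₀) := by
    have h' := (hinj.hasSum_iff hvanish).2 hdiffsum
    have heq : ((fun n : ℕ => (if R ∣ n then a n else 0) - (if n = 0 then a 0 else 0)) ∘ e)
        = fun k : ℕ => a ((k + 1) * R) := by
      funext k
      have hd : R ∣ (k + 1) * R := dvd_mul_left R (k + 1)
      have hne : (k + 1) * R ≠ 0 := by positivity
      simp [Function.comp, he, hd, hne]
    rwa [heq] at h'
  -- bound the tail
  set r : ℝ := (ρ ^ R)⁻¹ with hr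
  have hρR : (1 : ℝ) < ρ ^ R := one_lt_pow₀ hρ (by omega)
  have hr0 : 0 ≤ r := by positivity
  have hr1 : r < 1 := by
    rw [hr, inv_lt_one_iff₀]; right; exact hρR
  have hb : ∀ k : ℕ, ‖a ((k + 1) * R)‖ ≤ M * r ^ (k + 1) := by
    intro k
    refine le_trans (hcoeff _) ?_
    rw [hr, ← inv_pow, ← pow_mul, div_eq_mul_inv, ← inv_pow, mul_comm R (k+1)]
  have hgeom : HasSum (fun k : ℕ => M * r ^ (k + 1)) (M * r * (1 - r)⁻¹) := by
    have h' := (hasSum_geometric_of_lt_one hr0 hr1).mul_left (M * r)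
    have heq : (fun k : ℕ => M * r * r ^ k) = fun k : ℕ => M * r ^ (k + 1) := by
      funext k; ring
    rwa [heq] at h'
  have hsummable : Summable fun k : ℕ => ‖a ((k + 1) * R)‖ :=
    Summable.of_nonneg_of_le (fun _ => norm_nonneg _) hb hgeom.summable
  have hnorm : ‖(1 / (R : ℂ)) * (∑ j ∈ Finset.range R, f (z₀ + ζ ^ j)) - f z₀‖
      ≤ M * r * (1 - r)⁻¹ := by
    rw [← hre.tsum_eq]
    refine le_trans (norm_tsum_le_tsum_norm hsummable) ?_
    rw [← hgeom.tsum_eq]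
    exact Summable.tsum_le_tsum hb hsummable hgeom.summable
  refine le_trans hnorm (le_of_eq ?_)
  rw [hr]
  have hne1 : ρ ^ R ≠ 0 := by positivity
  have hne2 : ρ ^ R - 1 ≠ 0 := by nlinarith
  field_simp
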